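/- Let X and Y be independent exponential random variables with means λ_a and λ_b, and c > 0. Then E[(X/Y)·𝟙{X ≤ cY}] = (λ_a/λ_b)·( ln(1 + c·λ_b/λ_a) − c·λ_b/(λ_a + c·λ_b) ). -/

import Mathlib

open MeasureTheory ProbabilityTheory

open Set Real
open scoped ENNReal NNReal

lemma aux_int_exp {s : ℝ} (hs : 0 < s) :
    ∫ y in Ioi (0:ℝ), Real.exp (-(s*y)) = 1/s := by
  have h : ∀ x ∈ Ici (0:ℝ), HasDerivAt (fun a => -Real.exp (-(s*a))/s) (Real.exp (-(s*x))) x := by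
    intro x _
    have := (hasDerivAt_neg_exp_mul_exp (r := s) (x := x)).div_const s
    simpa [mul_comm, mul_div_assoc, mul_div_cancel_left₀ _ hs.ne'] using this
  have hint : IntegrableOn (fun y => Real.exp (-(s*y))) (Ioi (0:ℝ)) := by
    simpa [neg_mul] using exp_neg_integrableOn_Ioi 0 hs
  have htend : Filter.Tendsto (fun a : ℝ => -Real.exp (-(s*a))/s) Filter.atTop (nhds 0) := by
    have h1 : Filter.Tendsto (fun a : ℝ => -(s*a)) Filter.atTop Filter.atBot :=
      Filter.tendsto_neg_atTop_atBot.comp (Filter.tendsto_id.const_mul_atTop hs)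
    have := ((Real.tendsto_exp_atBot.comp h1).neg).div_const s
    simpa using this
  have := integral_Ioi_of_hasDerivAt_of_tendsto' h hint htend
  simpa [neg_div, one_div] using this

lemma aux_int_x_exp {a t : ℝ} (ha : 0 < a) (ht : 0 ≤ t) :
    ∫ x in Ioc (0:ℝ) t, x * (a * Real.exp (-(a*x))) = 1/a - (t + 1/a) * Real.exp (-(a*t)) := by
  have h : ∀ x ∈ uIcc (0:ℝ) t, HasDerivAt (fun x => -((x + 1/a) * Real.exp (-(a*x))))
      (x * (a * Real.exp (-(a*x)))) x := by
    intro x _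
    have h1 : HasDerivAt (fun x : ℝ => x + 1/a) 1 x := (hasDerivAt_id x).add_const _
    have h2 : HasDerivAt (fun x : ℝ => Real.exp (-(a*x))) (-(a * Real.exp (-(a*x)))) x := by
      have := hasDerivAt_neg_exp_mul_exp (r := a) (x := x)
      simpa [Pi.neg_def] using this.neg
    have : HasDerivAt (fun x => -((x + 1/a) * Real.exp (-(a*x))))
        (-(1 * Real.exp (-(a*x)) + (x + 1/a) * -(a * Real.exp (-(a*x))))) x := (h1.mul h2).neg
    convert this using 1
    have : 1/a * a = 1 := by field_simp
    linear_combination (-Real.exp (-(a*x))) * this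
  have hcont : IntervalIntegrable (fun x => x * (a * Real.exp (-(a*x)))) volume 0 t := by
    apply Continuous.intervalIntegrable
    continuity
  have := intervalIntegral.integral_eq_sub_of_hasDerivAt h hcont
  rw [intervalIntegral.integral_of_le ht] at this
  rw [this]
  simp
  ring

lemma aux_frullani {b d : ℝ} (hb : 0 < b) (hbd : b ≤ d) :
    ∫ y in Ioi (0:ℝ), (Real.exp (-(b*y)) - Real.exp (-(d*y))) / y = Real.log (d/b) := by
  have hd : 0 < d := lt_of_lt_of_le hb hbd
  have key : ∀ y ∈ Ioi (0:ℝ), (Real.exp (-(b*y)) - Real.exp (-(d*y))) / y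
      = ∫ s in Ioc b d, Real.exp (-(s*y)) := by
    intro y hy
    have hy0 : (0:ℝ) < y := hy
    have h : ∀ s ∈ uIcc b d, HasDerivAt (fun s => -Real.exp (-(s*y))/y) (Real.exp (-(s*y))) s := by
      intro s _
      have := (hasDerivAt_neg_exp_mul_exp (r := y) (x := s)).div_const y
      simpa [mul_comm, mul_div_assoc, mul_div_cancel_left₀ _ hy0.ne'] using this
    have hcont : IntervalIntegrable (fun s => Real.exp (-(s*y))) volume b d := by
      apply Continuous.intervalIntegrable; continuity
    have := intervalIntegral.integral_eq_sub_of_hasDerivAt h hcont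
    rw [intervalIntegral.integral_of_le hbd] at this
    rw [this]
    field_simp
    ring
  rw [setIntegral_congr_fun measurableSet_Ioi key]
  have hmeas : Measurable (Function.uncurry fun (y s : ℝ) => Real.exp (-(s*y))) := by
    apply Measurable.exp; fun_prop
  have hint : Integrable (Function.uncurry fun (y s : ℝ) => Real.exp (-(s*y)))
      ((volume.restrict (Ioi (0:ℝ))).prod (volume.restrict (Ioc b d))) := by
    refine (integrable_prod_iff hmeas.aestronglyMeasurable).2 ⟨?_, ?_⟩
    · refine Filter.Eventually.of_forall fun y => ?_
      exact Continuous.integrableOn_Ioc (by continuity)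
    · refine Integrable.mono' ((exp_neg_integrableOn_Ioi 0 hb).const_mul (d - b))
        hmeas.aestronglyMeasurable.norm.integral_prod_right' ?_
      filter_upwards [ae_restrict_mem measurableSet_Ioi] with y hy
      have hy0 : (0:ℝ) < y := hy
      calc ‖∫ s in Ioc b d, ‖Real.exp (-(s*y))‖‖
          ≤ Real.exp (-(b*y)) * (volume.restrict (Ioc b d) univ).toReal := by
            apply norm_integral_le_of_norm_le_const
            filter_upwards [ae_restrict_mem measurableSet_Ioc] with s hs
            rw [norm_norm, Real.norm_eq_abs, abs_of_pos (Real.exp_pos _)]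
            apply Real.exp_le_exp.2
            have := hs.1
            nlinarith
        _ ≤ (d - b) * (Real.exp (-b*y)) := by
            rw [Measure.restrict_apply_univ, Real.volume_Ioc,
              ENNReal.toReal_ofReal (by linarith)]
            rw [neg_mul]
            nlinarith [Real.exp_pos (-(b*y))]
  have hswap := MeasureTheory.integral_integral_swap hint
  rw [hswap]
  have inner : ∀ s ∈ Ioc b d, ∫ y in Ioi (0:ℝ), Real.exp (-(s*y)) = 1/s := fun s hs =>
    aux_int_exp (lt_of_lt_of_le hb hs.1.le)
  rw [setIntegral_congr_fun measurableSet_Ioc inner]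
  rw [← intervalIntegral.integral_of_le hbd]
  refine integral_one_div ?_
  intro h
  have h1 := h.1
  simp only [inf_le_iff, min_le_iff] at h1
  rcases h1 with h' | h' <;> linarith

lemma expMeasure_eq_withDensity (r : ℝ) :
    expMeasure r = volume.withDensity
      (fun x => ((Real.toNNReal (exponentialPDFReal r x) : ℝ≥0) : ℝ≥0∞)) := rfl

lemma aux_integral_expMeasure {r : ℝ} (hr : 0 < r) (g : ℝ → ℝ) :
    ∫ x, g x ∂(expMeasure r) = ∫ x in Ioi (0:ℝ), r * Real.exp (-(r*x)) * g x := by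
  rw [expMeasure_eq_withDensity,
    integral_withDensity_eq_integral_smul ((measurable_exponentialPDFReal r).real_toNNReal) g]
  have h1 : ∀ x : ℝ, (Real.toNNReal (exponentialPDFReal r x)) • g x
      = Set.indicator (Ici (0:ℝ)) (fun x => r * Real.exp (-(r*x)) * g x) x := by
    intro x
    rw [NNReal.smul_def, smul_eq_mul, Real.coe_toNNReal _ (exponentialPDFReal_nonneg hr x)]
    by_cases hx : 0 ≤ x
    · rw [Set.indicator_of_mem (mem_Ici.2 hx)]
      rw [exponentialPDFReal, gammaPDFReal, if_pos hx]
      simp [Real.rpow_one, Real.Gamma_one]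
    · rw [Set.indicator_of_notMem (by simpa using hx)]
      rw [exponentialPDFReal, gammaPDFReal, if_neg hx]
      simp
  simp_rw [h1]
  rw [integral_indicator measurableSet_Ici, integral_Ici_eq_integral_Ioi]


/-- for independent exponentials X, Y with means λa, λb and c > 0,
E[(X/Y)·𝟙{X ≤ cY}] = (λa/λb)·(ln(1 + c·λb/λa) − c·λb/(λa + c·λb)). -/
theorem stmt_6 {Ω : Type*} [MeasureSpace Ω] (μ : Measure Ω) [IsProbabilityMeasure μ]
    (lama lamb c : ℝ) (hlama : 0 < lama) (hlamb : 0 < lamb) (hc : 0 < c)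
    (X Y : Ω → ℝ) (hX : Measurable X) (hY : Measurable Y)
    (hXexp : Measure.map X μ = expMeasure (1 / lama))
    (hYexp : Measure.map Y μ = expMeasure (1 / lamb))
    (hindep : IndepFun X Y μ) :
    ∫ ω in {ω | X ω ≤ c * Y ω}, X ω / Y ω ∂μ =
      (lama / lamb) * (Real.log (1 + c * lamb / lama) - c * lamb / (lama + c * lamb)) := by
  set a : ℝ := 1 / lama with ha_def
  set b : ℝ := 1 / lamb with hb_def
  have ha : 0 < a := by positivity
  have hb : 0 < b := by positivity
  set d : ℝ := a * c + b with hd_def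
  have hd : 0 < d := by positivity
  have hbd : b ≤ d := by nlinarith
  haveI : IsProbabilityMeasure (expMeasure a) := isProbabilityMeasure_expMeasure ha
  haveI : IsProbabilityMeasure (expMeasure b) := isProbabilityMeasure_expMeasure hb
  set g : ℝ × ℝ → ℝ := fun p => Set.indicator {p : ℝ × ℝ | p.1 ≤ c * p.2}
    (fun p => p.1 / p.2) p with hg_def
  have hgmeas : Measurable g := by
    apply Measurable.indicator (measurable_fst.div measurable_snd)
    exact measurableSet_le measurable_fst (measurable_const.mul measurable_snd)
  have hpair : Measurable fun ω => (X ω, Y ω) := hX.prodMk hY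
  have hmap : μ.map (fun ω => (X ω, Y ω)) = (expMeasure a).prod (expMeasure b) := by
    rw [← hXexp, ← hYexp]
    exact (indepFun_iff_map_prod_eq_prod_map_map hX.aemeasurable hY.aemeasurable).1 hindep
  -- step 1 : reduce to integral over the product measure
  have hsmeas : MeasurableSet {ω | X ω ≤ c * Y ω} :=
    measurableSet_le hX (measurable_const.mul hY)
  have step1 : ∫ ω in {ω | X ω ≤ c * Y ω}, X ω / Y ω ∂μ
      = ∫ p, g p ∂((expMeasure a).prod (expMeasure b)) := by
    rw [← integral_indicator hsmeas]
    have heq : ∀ ω, Set.indicator {ω | X ω ≤ c * Y ω} (fun ω => X ω / Y ω) ω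
        = g (X ω, Y ω) := by
      intro ω
      by_cases h : X ω ≤ c * Y ω <;> simp [hg_def, Set.indicator_apply, h]
    simp_rw [heq]
    rw [← hmap, integral_map hpair.aemeasurable hgmeas.aestronglyMeasurable]
  rw [step1]
  -- integrability of g on the product
  have hneg : ∀ {r : ℝ}, expMeasure r (Iio 0) = 0 := by
    intro r
    rw [show expMeasure r = volume.withDensity (exponentialPDF r) from rfl,
      withDensity_apply _ measurableSet_Iio]
    exact lintegral_exponentialPDF_of_nonpos le_rfl
  have hae1 : ∀ᵐ p ∂((expMeasure a).prod (expMeasure b)), 0 ≤ p.1 := by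
    rw [ae_iff]
    apply measure_mono_null (t := (Iio (0:ℝ)) ×ˢ (univ : Set ℝ))
    · intro p hp
      simp only [mem_setOf_eq, not_le] at hp
      exact ⟨hp, mem_univ _⟩
    · rw [Measure.prod_prod, hneg, zero_mul]
  have hae2 : ∀ᵐ p ∂((expMeasure a).prod (expMeasure b)), 0 ≤ p.2 := by
    rw [ae_iff]
    apply measure_mono_null (t := (univ : Set ℝ) ×ˢ (Iio (0:ℝ)))
    · intro p hp
      simp only [mem_setOf_eq, not_le] at hp
      exact ⟨mem_univ _, hp⟩
    · rw [Measure.prod_prod, hneg, mul_zero]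
  have hInt : Integrable g ((expMeasure a).prod (expMeasure b)) := by
    refine Integrable.mono' (integrable_const c) hgmeas.aestronglyMeasurable ?_
    filter_upwards [hae1, hae2] with p h1 h2
    by_cases hp : p.1 ≤ c * p.2
    · simp only [hg_def, Set.indicator_apply, mem_setOf_eq, if_pos hp]
      rcases eq_or_lt_of_le h2 with h2' | h2'
      · rw [← h2', div_zero, norm_zero]; exact hc.le
      · rw [Real.norm_eq_abs, abs_of_nonneg (div_nonneg h1 h2)]
        rw [div_le_iff₀ h2']
        linarith [hp]
    · simp only [hg_def, Set.indicator_apply, mem_setOf_eq, if_neg hp, norm_zero]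
      exact hc.le
  -- step 2 : Fubini
  rw [integral_prod_symm g hInt]
  -- step 3 : outer integral against expMeasure b
  rw [aux_integral_expMeasure hb]
  -- step 4 : compute the inner integral for y > 0
  have inner : ∀ y ∈ Ioi (0:ℝ),
      b * Real.exp (-(b*y)) * ∫ x, g (x, y) ∂(expMeasure a)
      = (b/a) * ((Real.exp (-(b*y)) - Real.exp (-(d*y))) / y) - (c*b) * Real.exp (-(d*y)) := by
    intro y hy
    have hy0 : (0:ℝ) < y := hy
    have hinner : ∫ x, g (x, y) ∂(expMeasure a)
        = (1/y) * (1/a - (c*y + 1/a) * Real.exp (-(a*(c*y)))) := by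
      rw [aux_integral_expMeasure ha]
      have hcongr : ∀ x ∈ Ioi (0:ℝ), a * Real.exp (-(a*x)) * g (x, y)
          = Set.indicator (Ioc 0 (c*y)) (fun x => (1/y) * (x * (a * Real.exp (-(a*x))))) x := by
        intro x hx
        have hx0 : (0:ℝ) < x := hx
        by_cases hxc : x ≤ c * y
        · rw [Set.indicator_of_mem (mem_Ioc.2 ⟨hx0, hxc⟩)]
          simp only [hg_def, Set.indicator_apply, mem_setOf_eq, if_pos hxc]
          field_simp
        · rw [Set.indicator_of_notMem (fun h => hxc (mem_Ioc.1 h).2)]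
          simp only [hg_def, Set.indicator_apply, mem_setOf_eq, if_neg hxc]
          ring
      rw [setIntegral_congr_fun measurableSet_Ioi hcongr]
      rw [setIntegral_indicator measurableSet_Ioc]
      rw [Set.inter_eq_self_of_subset_right Ioc_subset_Ioi_self]
      rw [integral_const_mul _ _]
      rw [aux_int_x_exp ha (by positivity)]
    rw [hinner]
    have hexp : Real.exp (-(a*(c*y))) * Real.exp (-(b*y)) = Real.exp (-(d*y)) := by
      rw [← Real.exp_add]
      congr 1
      rw [hd_def]
      ring
    rw [← hexp]
    field_simp
    ring
  rw [setIntegral_congr_fun measurableSet_Ioi inner]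
  -- step 5 : evaluate the two integrals
  have hI1 : IntegrableOn (fun y => (Real.exp (-(b*y)) - Real.exp (-(d*y))) / y) (Ioi (0:ℝ)) := by
    refine Integrable.mono' ((exp_neg_integrableOn_Ioi 0 hb).const_mul (d - b)) ?_ ?_
    · apply Measurable.aestronglyMeasurable
      fun_prop
    · filter_upwards [ae_restrict_mem measurableSet_Ioi] with y hy
      have hy0 : (0:ℝ) < y := hy
      have hmono : Real.exp (-(d*y)) ≤ Real.exp (-(b*y)) := by
        apply Real.exp_le_exp.2
        nlinarith [mul_nonneg (sub_nonneg.2 hbd) hy0.le]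
      rw [Real.norm_eq_abs, abs_of_nonneg (div_nonneg (by linarith) hy0.le)]
      rw [div_le_iff₀ hy0]
      have hkey : Real.exp (-(d*y)) = Real.exp (-(b*y)) * Real.exp (-((d-b)*y)) := by
        rw [← Real.exp_add]; congr 1; ring
      simp only [neg_mul]
      nlinarith [Real.add_one_le_exp (-((d-b)*y)), Real.exp_pos (-(b*y)),
        Real.exp_pos (-((d-b)*y))]
  have hI2 : IntegrableOn (fun y => Real.exp (-(d*y))) (Ioi (0:ℝ)) := by
    simpa [neg_mul] using exp_neg_integrableOn_Ioi 0 hd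
  rw [integral_sub ((hI1.const_mul _)) (hI2.const_mul _)]
  rw [integral_const_mul _ _, integral_const_mul _ _, aux_frullani hb hbd, aux_int_exp hd]
  -- final algebra
  have h1 : d / b = 1 + c * lamb / lama := by
    rw [hd_def, ha_def, hb_def]
    field_simp
    ring
  have h2 : b / a = lama / lamb := by
    rw [ha_def, hb_def]
    field_simp
  have h3 : c * b * (1/d) = lama / lamb * (c * lamb / (lama + c * lamb)) := by
    rw [hd_def, ha_def, hb_def]
    have : lama + c * lamb > 0 := by positivity
    field_simp
    ring
  rw [h1, h2, h3, mul_sub]
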